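/- Suppose (A,B) is a cone-flat solution with respect to ζ, i.e. F_A + ζB = 0 and d_A B = 0. If ζ is a harmonic two-form (dζ = d^*ζ = 0), then A is a Yang–Mills connection: d_A * F_A = 0. -/
import Mathlib


/-- **cone-flat pairs for harmonic `ζ` have Yang–Mills connection.**

Abstract formulation over an `m`-dimensional Riemannian manifold `M`:

* `Ω0, Ω1, Ω2` model `Ω⁰(M, Ad P)`, `Ω¹(M, Ad P)`, `Ω²(M, Ad P)`;
* `W, W'` model the `Ad P`-valued `(m-2)`- and `(m-1)`-forms, and `S, S'` the
  scalar `(m-2)`- and `(m-1)`-forms;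
* `zw B = ζ B` is wedging with the closed two-form `ζ`, `dA0 = d_A` on sections,
  `star2 = *` the Hodge star on `Ad P`-valued two-forms, `dAW = d_A` on
  `Ad P`-valued `(m-2)`-forms, `dS = d` on scalar `(m-2)`-forms;
* `sm0 σ B = σ B`, `sm0' τ B = τ B`, `sm1 σ η = σ ∧ η` are (wedge) products of scalar
  forms with `Ad P`-valued forms, and `sz = *ζ ∈ Ω^{m-2}(M)`;
* `hstar` is the identity `*(ζ B) = (*ζ) B`, `hLeib` the Leibniz rule
  `d_A(σ B) = (dσ) B + (-1)^{m-2} σ ∧ d_A B`, and `hharm` says `ζ` is harmonic: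
  `d^* ζ = 0`, i.e. `d(*ζ) = 0` (it is closed by assumption).

If `(A, B)` is cone-flat with respect to `ζ`, i.e. `F_A + ζ B = 0` and `d_A B = 0`,
then `A` is a Yang–Mills connection: `d_A * F_A = 0`. -/
theorem cone_flat_harmonic_zeta_yang_mills
    (m : ℕ)
    {Ω0 Ω1 Ω2 W W' S S' : Type*}
    [AddCommGroup Ω0] [Module ℝ Ω0] [AddCommGroup Ω1] [Module ℝ Ω1]
    [AddCommGroup Ω2] [Module ℝ Ω2]
    [AddCommGroup W] [Module ℝ W] [AddCommGroup W'] [Module ℝ W']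
    [AddCommGroup S] [Module ℝ S] [AddCommGroup S'] [Module ℝ S']
    (zw : Ω0 →ₗ[ℝ] Ω2)                 -- ζ ∧ ·
    (dA0 : Ω0 →ₗ[ℝ] Ω1)                -- d_A on sections
    (star2 : Ω2 →ₗ[ℝ] W)               -- Hodge star * : Ω² → Ω^{m-2}
    (dAW : W →ₗ[ℝ] W')                 -- d_A on Ad P-valued (m-2)-forms
    (dS : S →ₗ[ℝ] S')                  -- d on scalar (m-2)-forms
    (sm0 : S →ₗ[ℝ] Ω0 →ₗ[ℝ] W)         -- (scalar (m-2)-form) · (section)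
    (sm0' : S' →ₗ[ℝ] Ω0 →ₗ[ℝ] W')      -- (scalar (m-1)-form) · (section)
    (sm1 : S →ₗ[ℝ] Ω1 →ₗ[ℝ] W')        -- (scalar (m-2)-form) ∧ (Ad P-valued 1-form)
    (sz : S)                            -- *ζ
    (hstar : ∀ b : Ω0, star2 (zw b) = sm0 sz b)
    (hLeib : ∀ (σ : S) (b : Ω0),
      dAW (sm0 σ b) = sm0' (dS σ) b + ((-1 : ℝ)) ^ (m - 2) • sm1 σ (dA0 b))
    (hharm : dS sz = 0)                 -- ζ harmonic: d(*ζ) = 0, i.e. d^*ζ = 0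
    (FA : Ω2) (B : Ω0)
    (hcf1 : FA + zw B = 0)              -- cone-flat: F_A + ζ B = 0
    (hcf2 : dA0 B = 0) :                -- cone-flat: d_A B = 0
    dAW (star2 FA) = 0 := by
  have hFA : FA = -(zw B) := eq_neg_of_add_eq_zero_left hcf1
  rw [hFA, map_neg, map_neg, hstar, hLeib, hharm, hcf2, map_zero, map_zero,
    LinearMap.zero_apply, smul_zero, add_zero, neg_zero]
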